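/- arXiv:1304.6787 — 2 statements merged into one kernel-verified Lean document; each statement's English description precedes it below -/
import Mathlib

section
/- Let E, F, K be elements of an associative algebra over ℂ satisfying EF - FE = (K - K⁻¹)/(q_* - q_*⁻¹), KE = q_*² E K, KF = q_*⁻² F K, where q_* = iq and q is a complex number with q⁴ ≠ 1. Set ξ = [[0,1],[1,0]], η = [[0,i],[-i,0]], α = (q_* - q_*⁻¹)/(q - q⁻¹), and define in the (graded) tensor product algebra: 𝓔 = α E ⊗ ξ, 𝓕 = F ⊗ η, 𝓚 = K ⊗ iηξ. Then 𝓚𝓔 = q² 𝓔𝓚. -/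
open Complex

/-- In the super tensor product algebra, with `E, F, K` even elements satisfying the
`U_{q_*}(sl₂)` relations and odd elements `ξ, η` (anticommuting, squaring to 1,
commuting with the even elements `E, F, K` by the Koszul sign rule),
the element `𝓚 = K ⊗ iηξ` satisfies `𝓚𝓔 = q² 𝓔𝓚` where `𝓔 = α E ⊗ ξ`. -/
theorem osp_KE_relation {B : Type*} [Ring B] [Algebra ℂ B]
    (q : ℂ) (hq0 : q ≠ 0) (hq4 : q ^ 4 ≠ 1)
    (E F K Kinv ξ η : B)
    (hK : K * Kinv = 1) (hK' : Kinv * K = 1)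
    (hξ2 : ξ * ξ = 1) (hη2 : η * η = 1) (hξη : ξ * η + η * ξ = 0)
    (hEξ : E * ξ = ξ * E) (hEη : E * η = η * E)
    (hFξ : F * ξ = ξ * F) (hFη : F * η = η * F)
    (hKξ : K * ξ = ξ * K) (hKη : K * η = η * K)
    (hEF : E * F - F * E = ((Complex.I * q) - (Complex.I * q)⁻¹)⁻¹ • (K - Kinv))
    (hKE : K * E = ((Complex.I * q) ^ 2) • (E * K))
    (hKF : K * F = ((Complex.I * q) ^ 2)⁻¹ • (F * K)) :
    (Complex.I • (K * (η * ξ))) *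
        ((((Complex.I * q) - (Complex.I * q)⁻¹) / (q - q⁻¹)) • (E * ξ)) =
      (q ^ 2) •
        (((((Complex.I * q) - (Complex.I * q)⁻¹) / (q - q⁻¹)) • (E * ξ)) *
          (Complex.I • (K * (η * ξ)))) := by
  set α : ℂ := (((Complex.I * q) - (Complex.I * q)⁻¹) / (q - q⁻¹)) with hα
  have hξη' : ξ * η = -(η * ξ) := eq_neg_of_add_eq_zero_left hξη
  have h1 : (K * (η * ξ)) * (E * ξ) = K * E * η := by
    simp only [mul_assoc]
    rw [← mul_assoc ξ E ξ, ← hEξ, mul_assoc E ξ ξ, hξ2, mul_one, ← hEη]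
  have h2 : (E * ξ) * (K * (η * ξ)) = -(E * K * η) := by
    simp only [mul_assoc]
    rw [← mul_assoc ξ K, ← hKξ, mul_assoc K ξ, ← mul_assoc ξ η ξ, hξη', neg_mul,
      mul_assoc η ξ ξ, hξ2, mul_one, mul_neg, mul_neg, ← mul_assoc]
  have hIq : (Complex.I * q) ^ 2 = -(q ^ 2) := by
    rw [mul_pow, Complex.I_sq]; ring
  rw [smul_mul_assoc, mul_smul_comm, h1, hKE, hIq, smul_mul_assoc,
    smul_mul_assoc, mul_smul_comm, h2]
  simp only [smul_smul, smul_neg, mul_assoc]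
  rw [show Complex.I * (α * -q ^ 2) = -(q ^ 2 * (α * Complex.I)) by ring, neg_smul]
end

section
/- With the same setup, the anticommutator satisfies 𝓔𝓕 + 𝓕𝓔 = i(𝓚 - 𝓚⁻¹)/(q - q⁻¹). Hence 𝓔, 𝓕, 𝓚 satisfy the defining relations of U_q(osp(1|2)). -/
open Complex

/-- In the super tensor product algebra, with `E, F, K` even elements satisfying the
`U_{q_*}(sl₂)` relations and odd elements `ξ, η` (anticommuting, squaring to 1,
commuting with the even elements `E, F, K` by the Koszul sign rule),
the elements `𝓔 = α E ⊗ ξ`, `𝓕 = F ⊗ η`, `𝓚 = K ⊗ iηξ` satisfy the anticommutator relation `𝓔𝓕 + 𝓕𝓔 = i(𝓚 - 𝓚⁻¹)/(q - q⁻¹)` of `U_q(osp(1|2))`, with `𝓚⁻¹ = -i K⁻¹ ⊗ ξη`. -/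
theorem osp_EF_anticommutator {B : Type*} [Ring B] [Algebra ℂ B]
    (q : ℂ) (hq0 : q ≠ 0) (hq4 : q ^ 4 ≠ 1)
    (E F K Kinv ξ η : B)
    (hK : K * Kinv = 1) (hK' : Kinv * K = 1)
    (hξ2 : ξ * ξ = 1) (hη2 : η * η = 1) (hξη : ξ * η + η * ξ = 0)
    (hEξ : E * ξ = ξ * E) (hEη : E * η = η * E)
    (hFξ : F * ξ = ξ * F) (hFη : F * η = η * F)
    (hKξ : K * ξ = ξ * K) (hKη : K * η = η * K)
    (hEF : E * F - F * E = ((Complex.I * q) - (Complex.I * q)⁻¹)⁻¹ • (K - Kinv))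
    (hKE : K * E = ((Complex.I * q) ^ 2) • (E * K))
    (hKF : K * F = ((Complex.I * q) ^ 2)⁻¹ • (F * K)) :
    (((((Complex.I * q) - (Complex.I * q)⁻¹) / (q - q⁻¹)) • (E * ξ)) * (F * η) +
        (F * η) * ((((Complex.I * q) - (Complex.I * q)⁻¹) / (q - q⁻¹)) • (E * ξ))) =
      (Complex.I / (q - q⁻¹)) •
        ((Complex.I • (K * (η * ξ))) - ((-Complex.I) • (Kinv * (ξ * η)))) := by
  have hiq : Complex.I * q ≠ 0 := mul_ne_zero Complex.I_ne_zero hq0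
  have hd : q - q⁻¹ ≠ 0 := by
    intro h
    apply hq4
    have h' : q = q⁻¹ := sub_eq_zero.mp h
    have h2 : q ^ 2 = 1 := by
      calc q ^ 2 = q * q := sq q
        _ = q * q⁻¹ := by nth_rewrite 2 [h']; rfl
        _ = 1 := mul_inv_cancel₀ hq0
    calc q ^ 4 = (q ^ 2) ^ 2 := by ring
      _ = 1 := by rw [h2]; ring
  have ha : Complex.I * q - (Complex.I * q)⁻¹ ≠ 0 := by
    intro h
    apply hq4
    have h' : Complex.I * q = (Complex.I * q)⁻¹ := sub_eq_zero.mp h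
    have h2 : (Complex.I * q) ^ 2 = 1 := by
      calc (Complex.I * q) ^ 2 = (Complex.I * q) * (Complex.I * q) := sq _
        _ = (Complex.I * q) * (Complex.I * q)⁻¹ := by nth_rewrite 2 [h']; rfl
        _ = 1 := mul_inv_cancel₀ hiq
    have h3 : -q ^ 2 = 1 := by
      rw [mul_pow, Complex.I_sq] at h2; linear_combination h2
    linear_combination (1 - q ^ 2) * h3
  have hηξ : η * ξ = -(ξ * η) := eq_neg_of_add_eq_zero_right hξη
  have h1 : (E * ξ) * (F * η) = (E * F) * (ξ * η) := by
    rw [mul_assoc, ← mul_assoc ξ F η, ← hFξ, mul_assoc F ξ η, ← mul_assoc]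
  have h2 : (F * η) * (E * ξ) = (F * E) * (η * ξ) := by
    rw [mul_assoc, ← mul_assoc η E ξ, ← hEη, mul_assoc E η ξ, ← mul_assoc]
  set a := Complex.I * q - (Complex.I * q)⁻¹ with ha_def
  set d := q - q⁻¹ with hd_def
  set X := (K - Kinv) * (ξ * η) with hX_def
  have hL : (((a / d) • (E * ξ)) * (F * η) + (F * η) * ((a / d) • (E * ξ)))
      = ((a / d) * a⁻¹) • X := by
    rw [smul_mul_assoc, mul_smul_comm, h1, h2, hηξ, mul_neg, smul_neg, ← sub_eq_add_neg,
      ← smul_sub, ← sub_mul, hEF, smul_mul_assoc, smul_smul, hX_def]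
  have hR : (Complex.I / d) •
      ((Complex.I • (K * (η * ξ))) - ((-Complex.I) • (Kinv * (ξ * η))))
      = ((Complex.I / d) * (-Complex.I)) • X := by
    rw [hηξ, mul_neg, hX_def, sub_mul]
    module
  rw [hL, hR]
  congr 1
  field_simp
  linear_combination Complex.I_sq
end
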